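/- Let a1, c, mu0, mu1, σ > 0 and b ∈ ℝ with 0 < a1 < 2c. Set E = 4·a1³·mu1⁴·σ − 4·a1²·b·mu1³·σ − a1²·mu0²·mu1² − 4·a1²·mu0·mu1²·σ + 8·a1²·mu1²·σ + 2·a1·b·mu0·mu1 − 4·a1·b·mu1·σ − 4·a1·mu0·σ + 4·a1·σ − b², and assume E·(a1 − c) > 0. Define B = (a1·mu0·mu1 − b)/(2·a1·σ·(a1·mu1² + 1)), ω = −((a1·mu1²·σ − b·mu1 − mu0 + σ)·mu1)/(a1·mu1² + 1), λ = √(E/(16·a1·σ²·(a1 − c)·(a1·mu1² + 1)²)), d2 = 3·√(a1·(2c − a1))·E/(8·a1·σ·(a1·mu1² + 1)²·(a1 − c)), h2 = 3·E/(8·σ·(a1·mu1² + 1)²·(a1 − c)), and h0 = (−8·a1⁴·mu1⁴·σ² + 8·a1³·c·mu1⁴·σ² + 8·a1⁴·mu1⁴·σ − 8·a1²·b·c·mu1³·σ − 16·a1³·mu1²·σ² − 2·a1²·c·mu0²·mu1² − 8·a1²·c·mu0·mu1²·σ + 16·a1²·c·mu1²·σ² + 16·a1³·mu1²·σ + 4·a1·b·c·mu0·mu1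 − 8·a1·b·c·mu1·σ − 8·a1²·σ² − 8·a1·c·mu0·σ + 8·a1·c·σ² + 8·a1²·σ − 2·b²·c)/(−8·a1·σ·(a1·mu1² + 1)²·(a1 − c)). Then f(ξ) = d2·sech²(λ·ξ) and g(ξ) = h0 + h2·sech²(λ·ξ) satisfy the Schrödinger BBM–BBM associated ODE system with parameters a1, c, mu0, mu1, b, wave speed σ, and phase shifts B, ω. -/

import Mathlib

private lemma coshk (k x : ℝ) : HasDerivAt (fun y => Real.cosh (k*y)) (k * Real.sinh (k*x)) x := by
  have h : HasDerivAt (fun y : ℝ => k*y) k x := by simpa using (hasDerivAt_id x).const_mul k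
  exact ((Real.hasDerivAt_cosh (k*x)).comp x h).congr_deriv (by ring)

private lemma sinhk (k x : ℝ) : HasDerivAt (fun y => Real.sinh (k*y)) (k * Real.cosh (k*x)) x := by
  have h : HasDerivAt (fun y : ℝ => k*y) k x := by simpa using (hasDerivAt_id x).const_mul k
  exact ((Real.hasDerivAt_sinh (k*x)).comp x h).congr_deriv (by ring)

private lemma L1 (A Bc k x : ℝ) :
    HasDerivAt (fun y => A + Bc / Real.cosh (k*y)^2)
      (-2*Bc*k*Real.sinh (k*x)/Real.cosh (k*x)^3) x := by
  have hne : Real.cosh (k*x) ≠ 0 := (Real.cosh_pos (k*x)).ne'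
  have h2 : HasDerivAt (fun y => Real.cosh (k*y)^2)
      ((2:ℕ) * Real.cosh (k*x)^1 * (k * Real.sinh (k*x))) x := (coshk k x).pow 2
  have h3 := ((hasDerivAt_const x Bc).div h2 (pow_ne_zero 2 hne)).const_add A
  refine h3.congr_deriv ?_
  field_simp
  ring

private lemma L2 (Bc k x : ℝ) :
    HasDerivAt (fun y => -2*Bc*k*Real.sinh (k*y)/Real.cosh (k*y)^3)
      (-2*Bc*k^2*(Real.cosh (k*x)^2 - 3*Real.sinh (k*x)^2)/Real.cosh (k*x)^4) x := by
  have hne : Real.cosh (k*x) ≠ 0 := (Real.cosh_pos (k*x)).ne'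
  have hn : HasDerivAt (fun y => -2*Bc*k*Real.sinh (k*y)) (-2*Bc*k*(k*Real.cosh (k*x))) x :=
    (sinhk k x).const_mul _
  have hd : HasDerivAt (fun y => Real.cosh (k*y)^3)
      ((3:ℕ) * Real.cosh (k*x)^2 * (k * Real.sinh (k*x))) x := (coshk k x).pow 3
  have h3 := hn.div hd (pow_ne_zero 3 hne)
  refine h3.congr_deriv ?_
  field_simp
  ring

private lemma L3 (Bc k x : ℝ) :
    HasDerivAt (fun y => -2*Bc*k^2*(Real.cosh (k*y)^2 - 3*Real.sinh (k*y)^2)/Real.cosh (k*y)^4)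
      (8*Bc*k^3*Real.sinh (k*x)*(2*Real.cosh (k*x)^2 - 3*Real.sinh (k*x)^2)/Real.cosh (k*x)^5) x := by
  have hne : Real.cosh (k*x) ≠ 0 := (Real.cosh_pos (k*x)).ne'
  have hc2 : HasDerivAt (fun y => Real.cosh (k*y)^2)
      ((2:ℕ) * Real.cosh (k*x)^1 * (k * Real.sinh (k*x))) x := (coshk k x).pow 2
  have hs2 : HasDerivAt (fun y => Real.sinh (k*y)^2)
      ((2:ℕ) * Real.sinh (k*x)^1 * (k * Real.cosh (k*x))) x := (sinhk k x).pow 2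
  have hn := ((hc2.sub (hs2.const_mul 3)).const_mul (-2*Bc*k^2))
  have hd : HasDerivAt (fun y => Real.cosh (k*y)^4)
      ((4:ℕ) * Real.cosh (k*x)^3 * (k * Real.sinh (k*x))) x := (coshk k x).pow 4
  have h3 := hn.div hd (pow_ne_zero 4 hne)
  refine h3.congr_deriv ?_
  simp only [Pi.sub_apply]
  field_simp
  ring

set_option maxHeartbeats 4000000 in
theorem stmt_7
    (a1 c mu0 mu1 b : ℝ)
    (ha1 : 0 < a1) (hc : 0 < c) (hmu0 : 0 < mu0) (hmu1 : 0 < mu1)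
    (σ : ℝ) (hσ : 0 < σ) (ha1lt : a1 < 2*c)
    (E : ℝ) (hE : E = 4*a1^3*mu1^4*σ - 4*a1^2*b*mu1^3*σ - a1^2*mu0^2*mu1^2 - 4*a1^2*mu0*mu1^2*σ + 8*a1^2*mu1^2*σ + 2*a1*b*mu0*mu1 - 4*a1*b*mu1*σ - 4*a1*mu0*σ + 4*a1*σ - b^2) (hEsgn : E * (a1 - c) > 0)
    (B ω lam d2 h2 h0 : ℝ)
    (h_B : B = (a1*mu0*mu1 - b)/(2*a1*σ*(a1*mu1^2 + 1)))
    (h_ω : ω = -((a1*mu1^2*σ - b*mu1 - mu0 + σ)*mu1)/(a1*mu1^2 + 1))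
    (h_lam : lam = Real.sqrt (E/(16*a1*σ^2*(a1 - c)*(a1*mu1^2 + 1)^2)))
    (h_d2 : d2 = 3*Real.sqrt (a1*(2*c - a1))*E/(8*a1*σ*(a1*mu1^2 + 1)^2*(a1 - c)))
    (h_h2 : h2 = 3*E/(8*σ*(a1*mu1^2 + 1)^2*(a1 - c)))
    (h_h0 : h0 = (-8*a1^4*mu1^4*σ^2 + 8*a1^3*c*mu1^4*σ^2 + 8*a1^4*mu1^4*σ - 8*a1^2*b*c*mu1^3*σ - 16*a1^3*mu1^2*σ^2 - 2*a1^2*c*mu0^2*mu1^2 - 8*a1^2*c*mu0*mu1^2*σ + 16*a1^2*c*mu1^2*σ^2 + 16*a1^3*mu1^2*σ + 4*a1*b*c*mu0*mu1 - 8*a1*b*c*mu1*σ - 8*a1^2*σ^2 - 8*a1*c*mu0*σ + 8*a1*c*σ^2 + 8*a1^2*σ - 2*b^2*c)/(-8*a1*σ*(a1*mu1^2 + 1)^2*(a1 - c)))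
    (f g : ℝ → ℝ)
    (hfdef : ∀ ξ : ℝ, f ξ = d2 * (1/Real.cosh (lam*ξ))^2)
    (hgdef : ∀ ξ : ℝ, g ξ = h0 + h2 * (1/Real.cosh (lam*ξ))^2) :
    ∀ ξ : ℝ,
      (deriv f ξ * g ξ + f ξ * deriv g ξ + a1*σ * iteratedDeriv 3 f ξ + (mu0 + 2*a1*B*ω - 3*a1*B^2*σ - σ - 2*b*B) * deriv f ξ = 0) ∧
      ((B + mu1) * f ξ * g ξ + (3*a1*B*σ + b - a1*ω) * iteratedDeriv 2 f ξ + (ω + B*mu0 + a1*B^2*ω - a1*B^3*σ - B*σ - b*B^2) * f ξ = 0) ∧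
      (f ξ * deriv f ξ + g ξ * deriv g ξ + (c*σ) * iteratedDeriv 3 g ξ + (1 - σ) * deriv g ξ = 0) := by
  have hane : a1 ≠ 0 := ne_of_gt ha1
  have hσne : σ ≠ 0 := ne_of_gt hσ
  have hDne : a1*mu1^2 + 1 ≠ 0 := by positivity
  have hacne : a1 - c ≠ 0 := by
    intro h
    rw [h, mul_zero] at hEsgn
    exact lt_irrefl 0 hEsgn
  have hlam2 : lam^2 = E/(16*a1*σ^2*(a1 - c)*(a1*mu1^2 + 1)^2) := by
    rw [h_lam, Real.sq_sqrt]
    have heq : E/(16*a1*σ^2*(a1 - c)*(a1*mu1^2 + 1)^2)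
        = (E*(a1 - c))/(16*a1*σ^2*(a1 - c)^2*(a1*mu1^2 + 1)^2) := by
      rw [div_eq_div_iff]
      · ring
      · intro h
        rcases mul_eq_zero.mp h with h' | h'
        · rcases mul_eq_zero.mp h' with h'' | h''
          · rcases mul_eq_zero.mp h'' with h3 | h3
            · rcases mul_eq_zero.mp h3 with h4 | h4
              · norm_num at h4
              · exact hane h4
            · exact hσne (pow_eq_zero_iff two_ne_zero |>.mp h3)
          · exact hacne h''
        · exact hDne (pow_eq_zero_iff two_ne_zero |>.mp h')
      · positivity
    rw [heq]
    positivity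
  have hsqX : Real.sqrt (a1*(2*c - a1))^2 = a1*(2*c - a1) :=
    Real.sq_sqrt (by nlinarith)
  have hd2e : d2 = Real.sqrt (a1*(2*c - a1)) * (3*E/(8*a1*σ*(a1*mu1^2 + 1)^2*(a1 - c))) := by
    rw [h_d2]; ring
  have hd2sq : a1*d2^2 = (2*c - a1)*h2^2 := by
    rw [hd2e, mul_pow, hsqX, h_h2]
    field_simp
  have hA : h2 = 6*a1*σ*lam^2 := by
    rw [h_h2, hlam2]
    field_simp
    ring
  have hBid : h0 + 4*a1*σ*lam^2 + (mu0 + 2*a1*B*ω - 3*a1*B^2*σ - σ - 2*b*B) = 0 := by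
    rw [h_h0, hlam2, hE, h_B, h_ω]
    field_simp
    ring
  have hDid : h0 + 4*c*σ*lam^2 + 1 - σ = 0 := by
    rw [h_h0, hlam2, hE]
    field_simp
    ring
  have hα : (B + mu1)*h0 + 4*(3*a1*B*σ + b - a1*ω)*lam^2
      + (ω + B*mu0 + a1*B^2*ω - a1*B^3*σ - B*σ - b*B^2) = 0 := by
    rw [h_h0, hlam2, hE, h_B, h_ω]
    field_simp
    ring
  have hβ : (B + mu1)*h2 - 6*(3*a1*B*σ + b - a1*ω)*lam^2 = 0 := by
    rw [h_h2, hlam2, hE, h_B, h_ω]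
    field_simp
    ring
  -- derivatives
  have hCne : ∀ x : ℝ, Real.cosh (lam*x) ≠ 0 := fun x => (Real.cosh_pos (lam*x)).ne'
  have hf' : f = fun y => 0 + d2 / Real.cosh (lam*y)^2 := by
    funext y; rw [hfdef y]; ring
  have hg' : g = fun y => h0 + h2 / Real.cosh (lam*y)^2 := by
    funext y; rw [hgdef y]; ring
  have hDf : deriv f = fun x => -2*d2*lam*Real.sinh (lam*x)/Real.cosh (lam*x)^3 := by
    rw [hf']; exact funext fun x => (L1 0 d2 lam x).deriv
  have hD2f : deriv (deriv f)
      = fun x => -2*d2*lam^2*(Real.cosh (lam*x)^2 - 3*Real.sinh (lam*x)^2)/Real.cosh (lam*x)^4 := by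
    rw [hDf]; exact funext fun x => (L2 d2 lam x).deriv
  have hD3f : deriv (deriv (deriv f))
      = fun x => 8*d2*lam^3*Real.sinh (lam*x)*(2*Real.cosh (lam*x)^2 - 3*Real.sinh (lam*x)^2)/Real.cosh (lam*x)^5 := by
    rw [hD2f]; exact funext fun x => (L3 d2 lam x).deriv
  have hDg : deriv g = fun x => -2*h2*lam*Real.sinh (lam*x)/Real.cosh (lam*x)^3 := by
    rw [hg']; exact funext fun x => (L1 h0 h2 lam x).deriv
  have hD2g : deriv (deriv g)
      = fun x => -2*h2*lam^2*(Real.cosh (lam*x)^2 - 3*Real.sinh (lam*x)^2)/Real.cosh (lam*x)^4 := by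
    rw [hDg]; exact funext fun x => (L2 h2 lam x).deriv
  have hD3g : deriv (deriv (deriv g))
      = fun x => 8*h2*lam^3*Real.sinh (lam*x)*(2*Real.cosh (lam*x)^2 - 3*Real.sinh (lam*x)^2)/Real.cosh (lam*x)^5 := by
    rw [hD2g]; exact funext fun x => (L3 h2 lam x).deriv
  intro ξ
  have hS2 : Real.sinh (lam*ξ)^2 = Real.cosh (lam*ξ)^2 - 1 := by
    have := Real.cosh_sq (lam*ξ); linarith
  have hi2f : iteratedDeriv 2 f ξ = deriv (deriv f) ξ := by
    rw [show (2:ℕ) = 1 + 1 from rfl, iteratedDeriv_succ, iteratedDeriv_one]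
  have hi3f : iteratedDeriv 3 f ξ = deriv (deriv (deriv f)) ξ := by
    rw [show (3:ℕ) = 2 + 1 from rfl, iteratedDeriv_succ, show (2:ℕ) = 1 + 1 from rfl,
      iteratedDeriv_succ, iteratedDeriv_one]
  have hi3g : iteratedDeriv 3 g ξ = deriv (deriv (deriv g)) ξ := by
    rw [show (3:ℕ) = 2 + 1 from rfl, iteratedDeriv_succ, show (2:ℕ) = 1 + 1 from rfl,
      iteratedDeriv_succ, iteratedDeriv_one]
  have hCnξ := hCne ξ
  have vDf : deriv f ξ = -2*d2*lam*Real.sinh (lam*ξ)/Real.cosh (lam*ξ)^3 := by rw [hDf]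
  have vDg : deriv g ξ = -2*h2*lam*Real.sinh (lam*ξ)/Real.cosh (lam*ξ)^3 := by rw [hDg]
  have vD2f : iteratedDeriv 2 f ξ
      = -2*d2*lam^2*(Real.cosh (lam*ξ)^2 - 3*Real.sinh (lam*ξ)^2)/Real.cosh (lam*ξ)^4 := by
    rw [hi2f, hD2f]
  have vD3f : iteratedDeriv 3 f ξ
      = 8*d2*lam^3*Real.sinh (lam*ξ)*(2*Real.cosh (lam*ξ)^2 - 3*Real.sinh (lam*ξ)^2)/Real.cosh (lam*ξ)^5 := by
    rw [hi3f, hD3f]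
  have vD3g : iteratedDeriv 3 g ξ
      = 8*h2*lam^3*Real.sinh (lam*ξ)*(2*Real.cosh (lam*ξ)^2 - 3*Real.sinh (lam*ξ)^2)/Real.cosh (lam*ξ)^5 := by
    rw [hi3g, hD3g]
  refine ⟨?_, ?_, ?_⟩
  · -- equation 1
    rw [vD3f, vDf, vDg, hfdef ξ, hgdef ξ, hS2]
    have hh0B : h0 = -(mu0 + 2*a1*B*ω - 3*a1*B^2*σ - σ - 2*b*B) - 4*a1*σ*lam^2 := by
      linarith [hBid]
    rw [hA, hh0B]
    field_simp
    ring
  · -- equation 2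
    rw [vD2f, hfdef ξ, hgdef ξ, hS2]
    field_simp
    linear_combination (d2*Real.cosh (lam*ξ)^2) * hα + d2 * hβ
  · -- equation 3
    rw [vD3g, vDf, vDg, hfdef ξ, hgdef ξ, hS2]
    have e3b : d2^2 + h2^2 - 12*c*σ*h2*lam^2 = 0 := by
      have e3b' : a1*(d2^2 + h2^2 - 12*c*σ*h2*lam^2) = 0 := by
        linear_combination hd2sq + 2*c*h2 * hA
      exact (mul_eq_zero.mp e3b').resolve_left hane
    have hh0D : h0 = σ - 1 - 4*c*σ*lam^2 := by linarith [hDid]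
    rw [hh0D]
    field_simp
    linear_combination (-2*lam*Real.sinh (lam*ξ)) * e3b
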